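/- Let S be a supercharacter theory of a finite group G, and define V_1(S) = V(S), V_i(S) = [V_{i-1}(S), S] for i ≥ 2, and the lower S-central series γ_1(S) = G, γ_i(S) = [γ_{i-1}(S), S]. Then for all i ≥ 1, γ_{i+1}(S) ≤ V_i(S) ≤ γ_i(S). -/

import Mathlib

open scoped BigOperators Pointwise

/-- `f : G → ℂ` is an irreducible character of `G`. -/
def IsIrrChar (G : Type) [Group G] [Fintype G] (f : G → ℂ) : Prop :=
  ∃ V : FDRep ℂ G, CategoryTheory.Simple V ∧ V.character = f

/-- A supercharacter theory of a finite group `G` (Diaconis–Isaacs): a partition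
`parts` of the set of irreducible characters of `G` together with a partition of `G`
into `S`-classes (`cls g` is the class of `g`), such that `{1}` is a class, the number
of parts equals the number of classes, and each supercharacter
`σ_X = ∑ χ ∈ X, χ(1)·χ` is constant on every class. -/
structure SCT (G : Type) [Group G] [Fintype G] where
  parts : Finset (Finset (G → ℂ))
  cls : G → Set G
  parts_cover : ∀ f : G → ℂ, IsIrrChar G f ↔ ∃ X ∈ parts, f ∈ X
  parts_disj : ∀ X ∈ parts, ∀ Y ∈ parts, X ≠ Y → Disjoint X Y
  parts_nonempty : ∀ X ∈ parts, X.Nonempty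
  mem_cls : ∀ g : G, g ∈ cls g
  cls_eq : ∀ g h : G, h ∈ cls g → cls h = cls g
  cls_one : cls (1 : G) = {1}
  card_eq : parts.card = Nat.card (Set.range cls)
  const : ∀ X ∈ parts, ∀ g h : G, h ∈ cls g →
    (∑ χ ∈ X, χ 1 * χ h) = (∑ χ ∈ X, χ 1 * χ g)

variable {G : Type} [Group G] [Fintype G]

namespace SCT

/-- The supercharacter attached to a part `X`. -/
noncomputable def superchar (_S : SCT G) (X : Finset (G → ℂ)) : G → ℂ := fun g => ∑ χ ∈ X, χ 1 * χ g

/-- The set `Irr(S)` of `S`-characters. -/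
def Irr (S : SCT G) : Set (G → ℂ) := {f | ∃ X ∈ S.parts, f = S.superchar X}

end SCT

/-- The kernel of a character-like function `f : G → ℂ`. -/
def charKer (f : G → ℂ) : Subgroup G where
  carrier := {g | ∀ h, f (g * h) = f h}
  one_mem' := by intro h; simp
  mul_mem' := by intro a b ha hb h; rw [mul_assoc, ha, hb]
  inv_mem' := by
    intro a ha h
    have := ha (a⁻¹ * h)
    rw [mul_inv_cancel_left] at this
    exact this.symm

namespace SCT

/-- `[H,S]`, the subgroup generated by the `g⁻¹k` with `g ∈ H`, `k ∈ Cl_S(g)`. -/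
def comm (S : SCT G) (H : Subgroup G) : Subgroup G :=
  Subgroup.closure {x | ∃ g ∈ H, ∃ k ∈ S.cls g, x = g⁻¹ * k}

/-- `[G,S]`. -/
def derived (S : SCT G) : Subgroup G := S.comm ⊤

/-- `Irr(S | N)`: the `S`-characters whose kernel does not contain `N`. -/
def IrrRel (S : SCT G) (N : Subgroup G) : Set (G → ℂ) :=
  {f | f ∈ S.Irr ∧ ¬ N ≤ charKer f}

/-- `g` is an `S`-Camina element: all of `Irr(S | [G,S])` vanishes at `g`. -/
def IsCaminaElt (S : SCT G) (g : G) : Prop :=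
  ∀ f ∈ S.IrrRel S.derived, f g = 0

/-- `N` is `S`-normal: a union of `S`-classes. -/
def IsNormal (S : SCT G) (N : Subgroup G) : Prop :=
  ∀ g ∈ N, S.cls g ⊆ N

/-- `(G,N)` is a generalised `S`-Camina pair. -/
def IsGCP (S : SCT G) (N : Subgroup G) : Prop :=
  S.IsNormal N ∧ ∀ g : G, g ∉ N → S.IsCaminaElt g

/-- The set `Z(S)` of elements with singleton `S`-class. -/
def centerSet (S : SCT G) : Set G := {g | S.cls g = {g}}

/-- The vanishing-off subgroup `V(S | N)`. -/
def V (S : SCT G) (N : Subgroup G) : Subgroup G :=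
  Subgroup.closure {g | ∃ f ∈ S.IrrRel N, f g ≠ 0}

/-- `V(S) = V(S | [G,S])`. -/
def VS (S : SCT G) : Subgroup G := S.V S.derived

/-- `U(S | N)`: the product of all `S`-normal subgroups `H` with `V(S | H) ≤ N`. -/
def U (S : SCT G) (N : Subgroup G) : Subgroup G :=
  ⨆ (H : Subgroup G) (_ : S.IsNormal H ∧ S.V H ≤ N), H

/-- The upper `S`-central series: `ζ_0 = 1` and `ζ_{i+1}/ζ_i = Z(S^{G/ζ_i})`,
i.e. `ζ_{i+1}` consists of the `g` whose `S`-class maps onto the single coset `gζ_i`. -/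
def zeta (S : SCT G) : ℕ → Subgroup G
  | 0 => ⊥
  | i + 1 => Subgroup.closure {g | ∀ k ∈ S.cls g, g⁻¹ * k ∈ S.zeta i}

/-- The lower `S`-central series `γ_1 = G`, `γ_{i+1} = [γ_i, S]` (with `γ_0 := G`). -/
def gamma (S : SCT G) : ℕ → Subgroup G
  | 0 => ⊤
  | 1 => ⊤
  | n + 2 => S.comm (S.gamma (n + 1))

/-- The series `V_1(S) = V(S)`, `V_{i+1}(S) = [V_i(S), S]` (with `V_0 := V(S)`). -/
def Vseq (S : SCT G) : ℕ → Subgroup G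
  | 0 => S.VS
  | 1 => S.VS
  | n + 2 => S.comm (S.Vseq (n + 1))

/-- `G` is a `VZ(S)`-group: every member of `Irr(S | [G,S])` vanishes off `Z(S)`. -/
def IsVZ (S : SCT G) : Prop :=
  ∀ f ∈ S.IrrRel S.derived, ∀ g : G, g ∉ S.centerSet → f g = 0

end SCT


open Classical

section Aux
variable {G : Type} [Group G] [Fintype G]

lemma pairing_char (V W : FDRep ℂ G) [CategoryTheory.Simple V] [CategoryTheory.Simple W] :
    ∑ g : G, V.character g * W.character g⁻¹ =
      if Nonempty (V ≅ W) then (Fintype.card G : ℂ) else 0 := by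
  have h := FDRep.char_orthonormal (k := ℂ) V W
  rw [Nat.card_eq_fintype_card,
    inv_mul_eq_iff_eq_mul₀ (by exact_mod_cast Fintype.card_ne_zero)] at h
  have h' : ∑ g : G, V.character g * W.character g⁻¹
      = (Fintype.card G : ℂ) * if Nonempty (V ≅ W) then 1 else 0 := h
  rw [h']
  split <;> simp

lemma irr_pairing {f1 f2 : G → ℂ} (h1 : IsIrrChar G f1) (h2 : IsIrrChar G f2) :
    ∑ x : G, f1 x * f2 x⁻¹ = if f1 = f2 then (Fintype.card G : ℂ) else 0 := by
  obtain ⟨V, hV, rfl⟩ := h1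
  obtain ⟨W, hW, rfl⟩ := h2
  haveI := hV; haveI := hW
  rw [pairing_char V W]
  by_cases hiso : Nonempty (V ≅ W)
  · rw [if_pos hiso, if_pos (FDRep.char_iso hiso.some)]
  · rw [if_neg hiso, if_neg]
    intro heq
    have h0 := pairing_char V W
    rw [if_neg hiso, heq] at h0
    have h1 := pairing_char W W
    rw [if_pos ⟨CategoryTheory.Iso.refl W⟩] at h1
    rw [h0] at h1
    exact Fintype.card_ne_zero (by exact_mod_cast h1.symm)

lemma irr_one {f : G → ℂ} (h : IsIrrChar G f) : ∃ n : ℕ, 0 < n ∧ f 1 = n := by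
  obtain ⟨V, hV, rfl⟩ := h
  haveI := hV
  refine ⟨Module.finrank ℂ V, ?_, by simp [FDRep.char_one]⟩
  rcases Nat.eq_zero_or_pos (Module.finrank ℂ V) with h0 | h0
  · exfalso
    haveI : Subsingleton V := by
      rw [← Module.finrank_zero_iff (R := ℂ)]; exact h0
    have hz : V.character = 0 := by
      funext g
      have : V.ρ g = 0 := Subsingleton.elim _ _
      simp [FDRep.character, this]
    have h1 := pairing_char V V
    rw [if_pos ⟨CategoryTheory.Iso.refl V⟩, hz] at h1
    simp at h1
    exact Fintype.card_ne_zero (by exact_mod_cast h1.symm)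
  · exact h0

variable (S : SCT G)

lemma mem_isIrr {X : Finset (G → ℂ)} (hX : X ∈ S.parts) {f : G → ℂ} (hf : f ∈ X) :
    IsIrrChar G f := (S.parts_cover f).mpr ⟨X, hX, hf⟩

lemma superchar_one {X : Finset (G → ℂ)} (hX : X ∈ S.parts) :
    ∃ m : ℕ, 0 < m ∧ S.superchar X 1 = m := by
  classical
  have h := S.parts_nonempty X hX
  choose n hn hv using (fun χ : {x // x ∈ X} => irr_one (mem_isIrr S hX χ.2))
  refine ⟨∑ χ : {x // x ∈ X}, n χ * n χ, ?_, ?_⟩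
  · obtain ⟨χ, hχ⟩ := h
    have hp : 0 < n ⟨χ, hχ⟩ * n ⟨χ, hχ⟩ := Nat.mul_pos (hn _) (hn _)
    exact lt_of_lt_of_le hp (Finset.single_le_sum (f := fun χ : {x // x ∈ X} => n χ * n χ) (fun i _ => Nat.zero_le _) (Finset.mem_univ (⟨χ, hχ⟩ : {x // x ∈ X})))
  · show (∑ χ ∈ X, χ 1 * χ 1) = _
    rw [← Finset.sum_attach X (fun χ => χ 1 * χ 1)]
    push_cast
    exact Finset.sum_congr rfl (fun χ _ => by rw [hv χ])

lemma superchar_one_ne_zero {X : Finset (G → ℂ)} (hX : X ∈ S.parts) :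
    S.superchar X 1 ≠ 0 := by
  obtain ⟨m, hm, hv⟩ := superchar_one S hX
  rw [hv]
  exact_mod_cast hm.ne'

lemma pairing_superchar {X Y : Finset (G → ℂ)} (hX : X ∈ S.parts) (hY : Y ∈ S.parts) :
    ∑ x : G, S.superchar X x * S.superchar Y x⁻¹ =
      if X = Y then (Fintype.card G : ℂ) * S.superchar X 1 else 0 := by
  classical
  have step : ∀ x : G, S.superchar X x * S.superchar Y x⁻¹
      = ∑ χ ∈ X, ∑ ψ ∈ Y, (χ 1 * ψ 1) * (χ x * ψ x⁻¹) := by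
    intro x
    rw [SCT.superchar, SCT.superchar, Finset.sum_mul_sum]
    exact Finset.sum_congr rfl (fun χ _ => Finset.sum_congr rfl (fun ψ _ => by ring))
  calc ∑ x : G, S.superchar X x * S.superchar Y x⁻¹
      = ∑ χ ∈ X, ∑ ψ ∈ Y, (χ 1 * ψ 1) * (∑ x : G, χ x * ψ x⁻¹) := by
        simp only [step, Finset.mul_sum]
        rw [Finset.sum_comm]
        exact Finset.sum_congr rfl (fun χ _ => Finset.sum_comm)
    _ = ∑ χ ∈ X, ∑ ψ ∈ Y, (χ 1 * ψ 1) * (if χ = ψ then (Fintype.card G : ℂ) else 0) := by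
        refine Finset.sum_congr rfl (fun χ hχ => Finset.sum_congr rfl (fun ψ hψ => ?_))
        rw [irr_pairing (mem_isIrr S hX hχ) (mem_isIrr S hY hψ)]
    _ = ∑ χ ∈ X, (if χ ∈ Y then (χ 1 * χ 1) * (Fintype.card G : ℂ) else 0) := by
        refine Finset.sum_congr rfl (fun χ hχ => ?_)
        simp only [mul_ite, mul_zero]
        exact Finset.sum_ite_eq Y χ (fun ψ => χ 1 * ψ 1 * (Fintype.card G : ℂ))
    _ = if X = Y then (Fintype.card G : ℂ) * S.superchar X 1 else 0 := by
        by_cases hXY : X = Y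
        · subst hXY
          rw [if_pos rfl]
          rw [Finset.sum_congr rfl (fun χ hχ => if_pos hχ), SCT.superchar, Finset.mul_sum]
          exact Finset.sum_congr rfl (fun χ _ => by ring)
        · rw [if_neg hXY]
          have hd := S.parts_disj X hX Y hY hXY
          refine Finset.sum_eq_zero (fun χ hχ => ?_)
          rw [if_neg (fun hmem => (Finset.disjoint_left.mp hd) hχ hmem)]

/-- The submodule of `S`-class functions. -/
noncomputable def classFun (S : SCT G) : Submodule ℂ (G → ℂ) where
  carrier := {f | ∀ g h, h ∈ S.cls g → f h = f g}
  add_mem' := fun hf hg g h hh => by simp only [Pi.add_apply, hf g h hh, hg g h hh]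
  zero_mem' := fun g h _ => rfl
  smul_mem' := fun c f hf g h hh => by simp only [Pi.smul_apply, hf g h hh]

lemma superchar_mem_classFun (X : Finset (G → ℂ)) (hX : X ∈ S.parts) :
    S.superchar X ∈ classFun S :=
  fun g h hh => S.const X hX g h hh

noncomputable def classFunEquiv (S : SCT G) :
    classFun S ≃ₗ[ℂ] (↑(Set.range S.cls) → ℂ) where
  toFun f c := f.1 c.2.choose
  map_add' f g := rfl
  map_smul' c f := rfl
  invFun u := ⟨fun g => u ⟨S.cls g, Set.mem_range_self g⟩,
    fun g h hh => congrArg u (Subtype.ext (S.cls_eq g h hh))⟩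
  left_inv f := by
    apply Subtype.ext
    funext g
    have hsp : S.cls ((⟨S.cls g, Set.mem_range_self g⟩ : ↑(Set.range S.cls)).2.choose)
        = S.cls g := (⟨S.cls g, Set.mem_range_self g⟩ : ↑(Set.range S.cls)).2.choose_spec
    exact (f.2 _ g (by rw [hsp]; exact S.mem_cls g)).symm
  right_inv u := by
    funext c
    exact congrArg u (Subtype.ext c.2.choose_spec)

lemma finrank_classFun (S : SCT G) :
    Module.finrank ℂ (classFun S) = S.parts.card := by
  letI : Fintype ↑(Set.range S.cls) := Fintype.ofFinite _
  rw [(classFunEquiv S).finrank_eq, Module.finrank_fintype_fun_eq_card, S.card_eq,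
    Nat.card_eq_fintype_card]

/-- The family of supercharacters as elements of `classFun S`. -/
noncomputable def sfam (S : SCT G) : ↑S.parts → classFun S :=
  fun X => ⟨S.superchar X.1, superchar_mem_classFun S X.1 X.2⟩

lemma pair_expand (c : ↑S.parts → ℂ) {Y : Finset (G → ℂ)} (hY : Y ∈ S.parts) :
    ∑ x : G, (∑ X : ↑S.parts, c X * S.superchar X.1 x) * S.superchar Y x⁻¹
      = c ⟨Y, hY⟩ * ((Fintype.card G : ℂ) * S.superchar Y 1) := by
  classical
  calc ∑ x : G, (∑ X : ↑S.parts, c X * S.superchar X.1 x) * S.superchar Y x⁻¹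
      = ∑ X : ↑S.parts, c X * ∑ x : G, S.superchar X.1 x * S.superchar Y x⁻¹ := by
        simp only [Finset.sum_mul, Finset.mul_sum]
        rw [Finset.sum_comm]
        exact Finset.sum_congr rfl (fun X _ => Finset.sum_congr rfl (fun x _ => by ring))
    _ = ∑ X : ↑S.parts, c X * (if X.1 = Y then (Fintype.card G : ℂ) * S.superchar X.1 1 else 0) := by
        exact Finset.sum_congr rfl (fun X _ => by rw [pairing_superchar S X.2 hY])
    _ = c ⟨Y, hY⟩ * ((Fintype.card G : ℂ) * S.superchar Y 1) := by
        rw [Finset.sum_eq_single (⟨Y, hY⟩ : ↑S.parts)]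
        · rw [if_pos rfl]
        · intro X _ hne
          rw [if_neg (fun h => hne (Subtype.ext h)), mul_zero]
        · intro h
          exact absurd (Finset.mem_univ _) h

lemma sfam_li (S : SCT G) : LinearIndependent ℂ (sfam S) := by
  rw [Fintype.linearIndependent_iff]
  intro c hc Y
  have hfun : ∀ x : G, (∑ X : ↑S.parts, c X * S.superchar X.1 x) = 0 := by
    intro x
    have h := congrArg (fun v : classFun S => (v : G → ℂ) x) hc
    simpa [sfam, smul_eq_mul] using h
  have h2 : ∑ x : G, (∑ X : ↑S.parts, c X * S.superchar X.1 x) * S.superchar Y.1 x⁻¹ = 0 :=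
    Finset.sum_eq_zero (fun x _ => by rw [hfun x, zero_mul])
  rw [pair_expand S c Y.2] at h2
  rcases mul_eq_zero.mp h2 with h | h
  · simpa using h
  · exfalso
    rcases mul_eq_zero.mp h with h' | h'
    · exact Fintype.card_ne_zero (by exact_mod_cast h')
    · exact superchar_one_ne_zero S Y.2 h'

lemma expand_classFun {f : G → ℂ} (hf : f ∈ classFun S) :
    ∃ c : ↑S.parts → ℂ, ∀ g : G, f g = ∑ X : ↑S.parts, c X * S.superchar X.1 g := by
  have hsp : Submodule.span ℂ (Set.range (sfam S)) = ⊤ := by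
    apply (sfam_li S).span_eq_top_of_card_eq_finrank'
    rw [Fintype.card_coe, finrank_classFun]
  have hmem : (⟨f, hf⟩ : classFun S) ∈ Submodule.span ℂ (Set.range (sfam S)) := by
    rw [hsp]; trivial
  rw [Submodule.mem_span_range_iff_exists_fun] at hmem
  obtain ⟨c, hc⟩ := hmem
  refine ⟨c, fun g => ?_⟩
  have h := congrArg (fun v : classFun S => (v : G → ℂ) g) hc
  simpa [sfam, smul_eq_mul] using h.symm

lemma delta_one_mem (S : SCT G) :
    (fun g : G => if g = 1 then (1 : ℂ) else 0) ∈ classFun S := by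
  intro g h hh
  by_cases hg : g = 1
  · subst hg
    rw [S.cls_one] at hh
    simp only [Set.mem_singleton_iff] at hh
    simp [hh]
  · have hne : h ≠ 1 := by
      intro h1
      subst h1
      have e1 : S.cls 1 = S.cls g := S.cls_eq g 1 hh
      have hgmem : g ∈ S.cls 1 := by rw [e1]; exact S.mem_cls g
      rw [S.cls_one] at hgmem
      exact hg hgmem
    simp [hg, hne]

lemma sum_superchar_regular (S : SCT G) (t : G) (ht : t ≠ 1) :
    ∑ X : ↑S.parts, S.superchar X.1 t = 0 := by
  obtain ⟨c, hc⟩ := expand_classFun S (delta_one_mem S)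
  have hcoef : ∀ Y : ↑S.parts, c Y * (Fintype.card G : ℂ) = 1 := by
    intro Y
    have hp : ∑ x : G, (if x = 1 then (1 : ℂ) else 0) * S.superchar Y.1 x⁻¹
        = S.superchar Y.1 1 := by
      rw [Finset.sum_eq_single 1]
      · rw [if_pos rfl, one_mul, inv_one]
      · intro x _ hx
        rw [if_neg hx, zero_mul]
      · intro h
        exact absurd (Finset.mem_univ _) h
    have hq := pair_expand S c Y.2
    have heq : ∑ x : G, (if x = 1 then (1 : ℂ) else 0) * S.superchar Y.1 x⁻¹
        = ∑ x : G, (∑ X : ↑S.parts, c X * S.superchar X.1 x) * S.superchar Y.1 x⁻¹ :=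
      Finset.sum_congr rfl (fun x _ => by rw [← hc x])
    have hY : (⟨Y.1, Y.2⟩ : ↑S.parts) = Y := rfl
    rw [heq, hq, hY] at hp
    have hne := superchar_one_ne_zero S Y.2
    have h3 : (c Y * (Fintype.card G : ℂ)) * S.superchar Y.1 1
        = 1 * S.superchar Y.1 1 := by
      rw [one_mul]
      linear_combination hp
    exact mul_right_cancel₀ hne h3
  have h0 : (0 : ℂ) = ∑ X : ↑S.parts, c X * S.superchar X.1 t := by
    have := hc t
    simpa [ht] using this
  calc ∑ X : ↑S.parts, S.superchar X.1 t
      = ∑ X : ↑S.parts, (Fintype.card G : ℂ) * (c X * S.superchar X.1 t) := by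
        refine Finset.sum_congr rfl (fun X _ => ?_)
        have : c X * (Fintype.card G : ℂ) = 1 := hcoef X
        calc S.superchar X.1 t = (c X * (Fintype.card G : ℂ)) * S.superchar X.1 t := by
              rw [this, one_mul]
          _ = (Fintype.card G : ℂ) * (c X * S.superchar X.1 t) := by ring
    _ = (Fintype.card G : ℂ) * ∑ X : ↑S.parts, c X * S.superchar X.1 t := by
        rw [Finset.mul_sum]
    _ = 0 := by rw [← h0, mul_zero]

lemma indicator_mem (S : SCT G) (t : G) :
    (fun g : G => if g ∈ S.cls t then (1 : ℂ) else 0) ∈ classFun S := by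
  intro g h hh
  by_cases hg : g ∈ S.cls t
  · have hht : h ∈ S.cls t := by
      have h1 : S.cls g = S.cls t := S.cls_eq t g hg
      rw [← h1]; exact hh
    simp [hg, hht]
  · have hht : h ∉ S.cls t := by
      intro hmem
      have e1 : S.cls h = S.cls g := S.cls_eq g h hh
      have e2 : S.cls h = S.cls t := S.cls_eq t h hmem
      apply hg
      have : g ∈ S.cls g := S.mem_cls g
      rw [← e1, e2] at this
      exact this
    simp [hg, hht]

lemma derived_le_VS (S : SCT G) : S.derived ≤ S.VS := by
  intro t ht
  by_cases ht1 : t = 1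
  · subst ht1; exact one_mem _
  by_cases hex : ∃ X ∈ S.parts, ¬ S.derived ≤ charKer (S.superchar X) ∧ S.superchar X t ≠ 0
  · obtain ⟨X, hX, hker, hne⟩ := hex
    apply Subgroup.subset_closure
    exact ⟨S.superchar X, ⟨⟨X, hX, rfl⟩, hker⟩, hne⟩
  exfalso
  push_neg at hex
  classical
  set A := S.parts.filter (fun X => S.derived ≤ charKer (S.superchar X)) with hA
  have hz : ∑ X ∈ S.parts, S.superchar X t = 0 := by
    have h := sum_superchar_regular S t ht1
    rwa [Finset.sum_coe_sort S.parts (fun X => S.superchar X t)] at h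
  have hsplit : ∑ X ∈ S.parts, S.superchar X t = ∑ X ∈ A, S.superchar X 1 := by
    rw [← Finset.sum_filter_add_sum_filter_not S.parts
      (fun X => S.derived ≤ charKer (S.superchar X)) (fun X => S.superchar X t)]
    have h1 : ∑ X ∈ S.parts.filter
        (fun X => ¬ S.derived ≤ charKer (S.superchar X)), S.superchar X t = 0 := by
      refine Finset.sum_eq_zero (fun X hX => ?_)
      have hm := Finset.mem_filter.mp hX
      exact hex X hm.1 hm.2
    rw [h1, add_zero]
    refine Finset.sum_congr rfl (fun X hXA => ?_)
    have hker := (Finset.mem_filter.mp hXA).2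
    have hk : t ∈ charKer (S.superchar X) := hker ht
    have h2 := hk 1
    rwa [mul_one] at h2
  have hAempty : A = ∅ := by
    by_contra hne
    obtain ⟨X0, hX0⟩ := Finset.nonempty_iff_ne_empty.mpr hne
    have hpos : 0 < (∑ X ∈ A, S.superchar X 1).re := by
      rw [Complex.re_sum]
      refine Finset.sum_pos (fun X hXA => ?_) ⟨X0, hX0⟩
      obtain ⟨m, hm, hv⟩ := superchar_one S (Finset.mem_filter.mp hXA).1
      rw [hv]
      simpa using hm
    rw [← hsplit, hz] at hpos
    simp at hpos
  obtain ⟨c, hc⟩ := expand_classFun S (indicator_mem S t)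
  have h1 : (1 : ℂ) = ∑ X : ↑S.parts, c X * S.superchar X.1 t := by
    have := hc t
    simpa [S.mem_cls t] using this
  have h0 : ∀ X : ↑S.parts, S.superchar X.1 t = 0 := by
    intro X
    apply hex X.1 X.2
    intro hle
    have hmem : X.1 ∈ A := Finset.mem_filter.mpr ⟨X.2, hle⟩
    rw [hAempty] at hmem
    exact absurd hmem (Finset.notMem_empty _)
  rw [Finset.sum_congr rfl (fun X _ => by rw [h0 X, mul_zero])] at h1
  simp at h1

lemma comm_mono (S : SCT G) {H K : Subgroup G} (h : H ≤ K) : S.comm H ≤ S.comm K := by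
  apply Subgroup.closure_mono
  rintro x ⟨g, hg, k, hk, rfl⟩
  exact ⟨g, h hg, k, hk, rfl⟩

lemma gamma_two (S : SCT G) : S.gamma 2 = S.derived := rfl
lemma gamma_add_two (S : SCT G) (n : ℕ) : S.gamma (n + 2) = S.comm (S.gamma (n + 1)) := rfl
lemma Vseq_add_two (S : SCT G) (n : ℕ) : S.Vseq (n + 2) = S.comm (S.Vseq (n + 1)) := rfl

end Aux

/-- for all `i ≥ 1`, `γ_{i+1}(S) ≤ V_i(S) ≤ γ_i(S)`. -/
theorem gamma_succ_le_Vseq_le_gamma (S : SCT G) (i : ℕ) (hi : 1 ≤ i) :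
    S.gamma (i + 1) ≤ S.Vseq i ∧ S.Vseq i ≤ S.gamma i := by
  induction i with
  | zero => exact absurd hi (by norm_num)
  | succ n ih =>
    by_cases hn : n = 0
    · subst hn
      constructor
      · rw [show (1 + 1 : ℕ) = 2 from rfl, gamma_two]
        exact derived_le_VS S
      · exact le_top
    · have hn1 : 1 ≤ n := Nat.one_le_iff_ne_zero.mpr hn
      obtain ⟨h1, h2⟩ := ih hn1
      obtain ⟨m, rfl⟩ : ∃ m, n = m + 1 := ⟨n - 1, by omega⟩
      constructor
      · rw [show m + 1 + 1 + 1 = (m + 1) + 2 from rfl, gamma_add_two, Vseq_add_two]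
        exact comm_mono S h1
      · rw [show m + 1 + 1 = m + 2 from rfl, Vseq_add_two, gamma_add_two]
        exact comm_mono S h2
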